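/- In int-semantics, the reduction scheme [φ]int(ψ) ↔ (int(φ) → int([φ]ψ)) is valid. -/
import Mathlib


/-- Formulas of the public announcement language PAL (with the `int` modality). -/
inductive Form : Type
  | atom : ℕ → Form
  | neg : Form → Form
  | and : Form → Form → Form
  | K : Form → Form
  | int : Form → Form
  | ann : Form → Form → Form

/-- Material implication, defined classically. -/
def Form.imp (φ ψ : Form) : Form := .neg (.and φ (.neg ψ))

/-- Int-semantics for PAL on a topological subset model with valuation `v`. -/
def sat {α : Type*} [TopologicalSpace α] (v : ℕ → Set α) : Form → α → Set α → Prop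
  | .atom n, x, _ => x ∈ v n
  | .neg φ, x, U => ¬ sat v φ x U
  | .and φ ψ, x, U => sat v φ x U ∧ sat v ψ x U
  | .K φ, x, U => ∀ y ∈ U, sat v φ y U
  | .int φ, x, U => x ∈ interior {y ∈ U | sat v φ y U}
  | .ann φ ψ, x, U =>
      x ∈ interior {y ∈ U | sat v φ y U} → sat v ψ x (interior {y ∈ U | sat v φ y U})

/-- Reduction scheme for the interior modality:
`[φ]int(ψ) ↔ (int(φ) → int([φ]ψ))` is valid in int-semantics. -/
theorem reduction_int {α : Type*} [TopologicalSpace α] (v : ℕ → Set α) (φ ψ : Form)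
    (x : α) (U : Set α) (hx : x ∈ U) (hU : IsOpen U) :
    sat v (.ann φ (.int ψ)) x U ↔ sat v ((Form.int φ).imp (.int (.ann φ ψ))) x U := by
  set V := interior {y ∈ U | sat v φ y U} with hV
  have hVopen : IsOpen V := isOpen_interior
  have hVU : V ⊆ U := fun y hy => (interior_subset hy).1
  have key : ∀ z ∈ V,
      (z ∈ interior {y ∈ V | sat v ψ y V} ↔
        z ∈ interior {y ∈ U | sat v (.ann φ ψ) y U}) := by
    intro z hz
    have hset : {y ∈ V | sat v ψ y V} = V ∩ {y ∈ U | sat v (.ann φ ψ) y U} := by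
      ext y
      simp only [Set.mem_inter_iff, Set.mem_setOf_eq, sat]
      constructor
      · rintro ⟨hyV, hyψ⟩
        exact ⟨hyV, hVU hyV, fun _ => hyψ⟩
      · rintro ⟨hyV, _, h⟩
        exact ⟨hyV, h hyV⟩
    rw [hset, interior_inter, hVopen.interior_eq]
    · simp [hz]
  simp only [sat, Form.imp, not_and_not_right, ← hV]
  constructor
  · intro h hxV
    exact (key x hxV).mp (h hxV)
  · intro h hxV
    exact (key x hxV).mpr (h hxV)
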